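/- Let λ > 0, μ ≥ 0, ε ≥ 0 with λ + μ > 0, and let n₀ = ⌊μ/ω⌋ for ω > 0. Then for every n ∈ ℕ₀ with n ≤ n₀ and every r > 0, the quantity |(1/(4πr)) · (e^{i√(μ - ωn + iε)·r} − e^{−√λ·r})/(λ + μ − ωn + iε)| is bounded by a constant c depending only on λ, μ, ω (uniformly in r > 0, ε ∈ (0,1], and n ≤ n₀), where √(μ - ωn + iε) denotes the branch with positive imaginary part. -/

import Mathlib

open Complex

lemma im_cpow_half_nonneg {z : ℂ} (hz : 0 ≤ z.im) : 0 ≤ (z ^ ((1:ℂ)/2)).im := by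
  by_cases h0 : z = 0
  · simp [h0, Complex.zero_cpow (by norm_num : ((1:ℂ)/2) ≠ 0)]
  · rw [Complex.cpow_def_of_ne_zero h0, Complex.exp_im]
    have him : (Complex.log z * ((1:ℂ)/2)).im = Complex.arg z / 2 := by
      simp [Complex.mul_im, Complex.log_im]
      ring
    rw [him]
    have h1 : 0 ≤ Complex.arg z := Complex.arg_nonneg_iff.mpr hz
    have h2 : Complex.arg z ≤ Real.pi := Complex.arg_le_pi z
    have := Real.sin_nonneg_of_nonneg_of_le_pi (by linarith : 0 ≤ Complex.arg z / 2)
      (by linarith [Real.pi_pos] : Complex.arg z / 2 ≤ Real.pi)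
    positivity

theorem kernel_factor_uniform_bound
    (lam om mu : ℝ) (hlam : 0 < lam) (hom : 0 < om) (hmu : 0 ≤ mu) :
    ∃ c : ℝ, ∀ n : ℕ, n ≤ Nat.floor (mu / om) → ∀ r : ℝ, 0 < r →
      ∀ ε : ℝ, ε ∈ Set.Ioc (0 : ℝ) 1 →
      ‖(1 / (4 * Real.pi * r)) *
        ((Complex.exp (Complex.I *
            (((mu : ℂ) - om * n + ε * Complex.I) ^ ((1 : ℂ) / 2)) * r) -
          Complex.exp (-(Real.sqrt lam : ℝ) * r)) /
          ((lam : ℂ) + mu - om * n + ε * Complex.I))‖ ≤ c := by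
  set M : ℝ := Real.sqrt (mu + 1) + Real.sqrt lam + 1 with hMdef
  have hs1 : 0 ≤ Real.sqrt (mu + 1) := Real.sqrt_nonneg _
  have hs2 : 0 ≤ Real.sqrt lam := Real.sqrt_nonneg _
  have hM1 : 1 ≤ M := by simp only [hMdef]; linarith
  have hM0 : 0 < M := by linarith
  refine ⟨M / (2 * Real.pi * lam), ?_⟩
  intro n hn r hr ε hε
  obtain ⟨hε0, hε1⟩ := hε
  have hpi := Real.pi_pos
  -- `om * n ≤ mu`
  have hon : om * (n : ℝ) ≤ mu := by
    have h1 : (n : ℝ) ≤ (Nat.floor (mu / om) : ℝ) := Nat.cast_le.mpr hn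
    have h2 : (Nat.floor (mu / om) : ℝ) ≤ mu / om := Nat.floor_le (div_nonneg hmu hom.le)
    have h3 : (n : ℝ) ≤ mu / om := h1.trans h2
    calc om * (n : ℝ) ≤ om * (mu / om) := by
          exact mul_le_mul_of_nonneg_left h3 hom.le
      _ = mu := by field_simp
  set z : ℂ := (mu : ℂ) - om * n + ε * Complex.I with hzdef
  have hzre : z.re = mu - om * n := by simp [hzdef]
  have hzim : z.im = ε := by simp [hzdef]
  set w : ℂ := z ^ ((1:ℂ)/2) with hwdef
  have hwim : 0 ≤ w.im := im_cpow_half_nonneg (by rw [hzim]; exact hε0.le)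
  -- |z| ≤ mu + 1
  have hzabs : ‖z‖ ≤ mu + 1 := by
    calc ‖z‖ ≤ |z.re| + |z.im| := Complex.norm_le_abs_re_add_abs_im z
      _ ≤ mu + 1 := by
          rw [hzre, hzim, _root_.abs_of_nonneg (by linarith : (0:ℝ) ≤ mu - om * n),
            _root_.abs_of_pos hε0]
          linarith [mul_nonneg hom.le (Nat.cast_nonneg n : (0:ℝ) ≤ n)]
  -- |w| ≤ √(mu+1)
  have hwabs : ‖w‖ ≤ Real.sqrt (mu + 1) := by
    have : ‖w‖ = ‖z‖ ^ ((1:ℝ)/2) := by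
      rw [hwdef]
      have : ((1:ℂ)/2) = (((1:ℝ)/2 : ℝ) : ℂ) := by norm_num
      rw [this, Complex.norm_cpow_real]
    rw [this, Real.sqrt_eq_rpow]
    have h01 : (0:ℝ) ≤ mu + 1 := by linarith
    exact Real.rpow_le_rpow (norm_nonneg z) hzabs (by norm_num)
  -- denominator
  set D : ℂ := (lam : ℂ) + mu - om * n + ε * Complex.I with hDdef
  have hDre : D.re = lam + mu - om * n := by simp [hDdef]
  have hDabs : lam ≤ ‖D‖ := by
    calc lam ≤ D.re := by rw [hDre]; linarith
      _ ≤ ‖D‖ := Complex.re_le_norm D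
  have hD0 : 0 < ‖D‖ := lt_of_lt_of_le hlam hDabs
  -- numerator bound : |exp(I w r) - exp(-√lam r)| ≤ 2 * r * M
  set A : ℂ := Complex.I * w * r with hAdef
  set B : ℂ := (-(Real.sqrt lam : ℝ) : ℂ) * r with hBdef
  have hAre : A.re = -(w.im * r) := by simp [hAdef]
  have hAabs : ‖A‖ = ‖w‖ * r := by
    simp [hAdef, Complex.norm_real, Real.norm_eq_abs, abs_of_pos hr]
  have hBabs : ‖B‖ = Real.sqrt lam * r := by
    simp [hBdef, Complex.norm_real, Real.norm_eq_abs, abs_of_pos hr, _root_.abs_of_nonneg hs2]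
  have hnum : ‖Complex.exp A - Complex.exp B‖ ≤ 2 * r * M := by
    rcases le_or_gt (r * M) 1 with hcase | hcase
    · -- small r : use Lipschitz bound via exp - 1
      have hA1 : ‖A‖ ≤ 1 := by
        rw [hAabs]
        calc ‖w‖ * r ≤ Real.sqrt (mu+1) * r :=
              mul_le_mul_of_nonneg_right hwabs hr.le
          _ ≤ M * r := mul_le_mul_of_nonneg_right (by linarith) hr.le
          _ ≤ 1 := by rw [mul_comm]; exact hcase
      have hB1 : ‖B‖ ≤ 1 := by
        rw [hBabs]
        calc Real.sqrt lam * r ≤ M * r := mul_le_mul_of_nonneg_right (by linarith) hr.le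
          _ ≤ 1 := by rw [mul_comm]; exact hcase
      have e1 := Complex.norm_exp_sub_one_le hA1
      have e2 := Complex.norm_exp_sub_one_le hB1
      calc ‖Complex.exp A - Complex.exp B‖
          = ‖(Complex.exp A - 1) - (Complex.exp B - 1)‖ := by ring_nf
        _ ≤ ‖Complex.exp A - 1‖ + ‖Complex.exp B - 1‖ :=
            norm_sub_le _ _
        _ ≤ 2 * ‖A‖ + 2 * ‖B‖ := by linarith
        _ = 2 * r * (‖w‖ + Real.sqrt lam) := by rw [hAabs, hBabs]; ring
        _ ≤ 2 * r * M := by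
            apply mul_le_mul_of_nonneg_left _ (by linarith : (0:ℝ) ≤ 2 * r)
            linarith
    · -- large r : both exponentials bounded by 1
      have e1 : ‖Complex.exp A‖ ≤ 1 := by
        rw [Complex.norm_exp, hAre]
        exact Real.exp_le_one_iff.mpr (by nlinarith)
      have e2 : ‖Complex.exp B‖ ≤ 1 := by
        rw [Complex.norm_exp]
        have : B.re = -(Real.sqrt lam * r) := by simp [hBdef]
        rw [this]
        exact Real.exp_le_one_iff.mpr (by nlinarith)
      calc ‖Complex.exp A - Complex.exp B‖
          ≤ ‖Complex.exp A‖ + ‖Complex.exp B‖ :=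
            norm_sub_le _ _
        _ ≤ 2 := by linarith
        _ ≤ 2 * r * M := by nlinarith
  -- put things together
  have habs : ‖(1 / (4 * Real.pi * r) : ℝ) *
      ((Complex.exp A - Complex.exp B) / D)‖
      = (1 / (4 * Real.pi * r)) * (‖Complex.exp A - Complex.exp B‖ /
        ‖D‖) := by
    rw [norm_mul, norm_div, Complex.norm_real, Real.norm_eq_abs,
      abs_of_pos (by positivity : (0:ℝ) < 1 / (4 * Real.pi * r))]
  have key : (1 / (4 * Real.pi * r)) * (‖Complex.exp A - Complex.exp B‖ /
      ‖D‖) ≤ M / (2 * Real.pi * lam) := by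
    have h1 : ‖Complex.exp A - Complex.exp B‖ / ‖D‖
        ≤ (2 * r * M) / lam := by
      apply div_le_div₀ (by positivity) hnum hlam hDabs
    calc (1 / (4 * Real.pi * r)) * (‖Complex.exp A - Complex.exp B‖ /
        ‖D‖)
        ≤ (1 / (4 * Real.pi * r)) * ((2 * r * M) / lam) :=
          mul_le_mul_of_nonneg_left h1 (by positivity)
      _ = M / (2 * Real.pi * lam) := by field_simp; ring
  -- identify the statement's expression with ours
  have hcast : ((1 / (4 * Real.pi * r) : ℝ) : ℂ) = (1 / (4 * Real.pi * r) : ℂ) := by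
    push_cast; ring
  calc ‖(1 / (4 * Real.pi * r)) *
        ((Complex.exp (Complex.I * (((mu : ℂ) - om * n + ε * Complex.I) ^ ((1 : ℂ) / 2)) * r) -
          Complex.exp (-(Real.sqrt lam : ℝ) * r)) /
          ((lam : ℂ) + mu - om * n + ε * Complex.I))‖
      = ‖(1 / (4 * Real.pi * r) : ℝ) *
        ((Complex.exp A - Complex.exp B) / D)‖ := by
        rw [hAdef, hBdef, hDdef, hwdef, hzdef, hcast]
    _ ≤ M / (2 * Real.pi * lam) := by rw [habs]; exact key
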